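/- Let K be a differential field of characteristic 0 with field of constants C, L|K a Picard-Vessiot extension for the equation L(Y)=0, C̄ an algebraic closure of C, and L̄ = L·C̄, K̄ = K·C̄. Then L̄|K̄ is a Picard-Vessiot extension for the same equation L(Y)=0 (viewed over K̄): L̄ is differentially generated over K̄ by a fundamental system of solutions of L(Y)=0, and the field of constants of L̄ equals the field of constants C̄ of K̄. -/

import Mathlib

/-!
Common setup: differential fields realized as subfields of an ambient field `M`
of characteristic zero equipped with a derivation `D`.
-/

namespace PVGalois

variable {M : Type*} [Field M]

/-- `D` is a derivation on the field `M`. -/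
structure IsDerivation (D : M → M) : Prop where
  map_add : ∀ a b : M, D (a + b) = D a + D b
  leibniz : ∀ a b : M, D (a * b) = a * D b + D a * b

/-- A subfield `F` of `M` is a differential subfield if it is closed under `D`. -/
def DiffClosed (D : M → M) (F : Subfield M) : Prop :=
  ∀ x ∈ F, D x ∈ F

/-- The set of constants of the differential subfield `F`. -/
def constantsOf (D : M → M) (F : Subfield M) : Set M :=
  {x | x ∈ F ∧ D x = 0}

/-- `L` is differentially generated over `K` by the set `S`:
`L` is the smallest differential subfield containing `K` and `S`. -/
def IsDiffGenBy (D : M → M) (K : Subfield M) (S : Set M) (L : Subfield M) : Prop :=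
  K ≤ L ∧ S ⊆ (L : Set M) ∧ DiffClosed D L ∧
    ∀ F : Subfield M, K ≤ F → S ⊆ (F : Set M) → DiffClosed D F → L ≤ F

/-- `y` is a solution of the homogeneous linear differential equation
`Y⁽ⁿ⁾ + a_{n-1} Y⁽ⁿ⁻¹⁾ + ⋯ + a_1 Y' + a_0 Y = 0`. -/
def IsSolution (D : M → M) (n : ℕ) (a : Fin n → M) (y : M) : Prop :=
  D^[n] y + ∑ i : Fin n, a i * D^[(i : ℕ)] y = 0

/-- A family `v` is linearly independent over the set of scalars `A ⊆ M`. -/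
def LinIndepOver {ι : Type*} (A : Set M) (v : ι → M) : Prop :=
  ∀ (s : Finset ι) (c : ι → M), (∀ i, c i ∈ A) →
    ∑ i ∈ s, c i * v i = 0 → ∀ i ∈ s, c i = 0

/-- Every element of `T` is a finite linear combination of the family `v`
with coefficients in `A`. -/
def SpansOver {ι : Type*} (A : Set M) (v : ι → M) (T : Set M) : Prop :=
  ∀ x ∈ T, ∃ (s : Finset ι) (c : ι → M), (∀ i, c i ∈ A) ∧ x = ∑ i ∈ s, c i * v i

/-- `Cb` is an algebraic closure of the set `C` inside `M`:
it contains `C`, is algebraic over `C`, and is algebraically closed. -/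
def IsAlgClosureOf (C : Set M) (Cb : Subfield M) : Prop :=
  C ⊆ (Cb : Set M) ∧
  (∀ x ∈ Cb, ∃ p : Polynomial M, p ≠ 0 ∧ (∀ k, p.coeff k ∈ C) ∧ p.eval x = 0) ∧
  (∀ p : Polynomial M, 0 < p.degree → (∀ k, p.coeff k ∈ Cb) → ∃ x ∈ Cb, p.eval x = 0)

/-- `L|K` is a Picard-Vessiot extension for the equation with coefficients `a`,
with fundamental system of solutions `η`. -/
def IsPicardVessiotWith (D : M → M) (K L : Subfield M) (n : ℕ) (a : Fin n → M)
    (η : Fin n → M) : Prop :=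
  (∀ i, a i ∈ K) ∧ (∀ j, IsSolution D n a (η j)) ∧
  LinIndepOver (constantsOf D L) η ∧
  IsDiffGenBy D K (Set.range η) L ∧
  constantsOf D L = constantsOf D K

/-- `L|K` is a Picard-Vessiot extension for the equation with coefficients `a`. -/
def IsPicardVessiot (D : M → M) (K L : Subfield M) (n : ℕ) (a : Fin n → M) : Prop :=
  ∃ η : Fin n → M, IsPicardVessiotWith D K L n a η

/-- A `K`-differential morphism from `L` into `Lb`: a ring homomorphism defined on `L`
with values in `Lb`, fixing `K` pointwise and commuting with the derivation `D`. -/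
def IsDiffHom (D : M → M) (K L Lb : Subfield M) (σ : ↥L →+* M) : Prop :=
  (∀ x, σ x ∈ Lb) ∧ (∀ x : ↥L, (x : M) ∈ K → σ x = (x : M)) ∧
  ∀ (x : M) (hx : x ∈ L) (hx' : D x ∈ L), σ ⟨D x, hx'⟩ = D (σ ⟨x, hx⟩)

/-- A `Kb`-differential automorphism of `Lb`: a `Kb`-differential morphism of `Lb`
into itself which is onto `Lb`. -/
def IsDiffAut (D : M → M) (Kb Lb : Subfield M) (τ : ↥Lb →+* M) : Prop :=
  IsDiffHom D Kb Lb Lb τ ∧ ∀ y ∈ Lb, ∃ x : ↥Lb, τ x = y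

end PVGalois

open PVGalois

namespace PVAux
open Polynomial PVGalois
variable {M : Type*} [Field M] {D : M → M}

lemma d_zero (hD : IsDerivation D) : D 0 = 0 := by
  have h := hD.map_add 0 0
  rw [add_zero] at h
  exact (left_eq_add.mp h)

lemma d_one (hD : IsDerivation D) : D 1 = 0 := by
  have h := hD.leibniz 1 1
  rw [one_mul, mul_one] at h
  simpa using h

lemma d_neg (hD : IsDerivation D) (x : M) : D (-x) = -(D x) := by
  have h := hD.map_add x (-x)
  rw [add_neg_cancel, d_zero hD] at h
  linear_combination -h

lemma d_sum (hD : IsDerivation D) {ι : Type*} (s : Finset ι) (f : ι → M) :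
    D (∑ i ∈ s, f i) = ∑ i ∈ s, D (f i) := by
  classical
  induction s using Finset.induction_on with
  | empty => simpa using d_zero hD
  | insert _ _ h ih => rw [Finset.sum_insert h, Finset.sum_insert h, hD.map_add, ih]

lemma d_nat (hD : IsDerivation D) (n : ℕ) : D (n : M) = 0 := by
  induction n with
  | zero => simpa using d_zero hD
  | succ k ih => push_cast; rw [hD.map_add, ih, d_one hD, add_zero]

lemma d_inv (hD : IsDerivation D) (x : M) : D x⁻¹ = -(D x) * (x⁻¹ * x⁻¹) := by
  rcases eq_or_ne x 0 with rfl | hx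
  · simp [d_zero hD]
  · have h := hD.leibniz x x⁻¹
    rw [mul_inv_cancel₀ hx, d_one hD] at h
    refine mul_left_cancel₀ hx ?_
    have h2 : x * D x⁻¹ = -(D x * x⁻¹) := by linear_combination -h
    rw [h2]
    field_simp

lemma d_pow (hD : IsDerivation D) (x : M) (k : ℕ) :
    D (x ^ (k + 1)) = (k + 1 : M) * x ^ k * D x := by
  induction k with
  | zero => simp
  | succ m ih =>
    have h1 : x ^ (m + 2) = x * x ^ (m + 1) := by ring
    rw [h1, hD.leibniz, ih]
    push_cast
    ring

/-- The polynomial obtained by applying `D` to each coefficient. -/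
noncomputable def dPoly (D : M → M) (p : M[X]) : M[X] :=
  p.sum fun k c => C (D c) * X ^ k

lemma coeff_dPoly (hD : IsDerivation D) (p : M[X]) (k : ℕ) :
    (dPoly D p).coeff k = D (p.coeff k) := by
  classical
  rw [dPoly, Polynomial.sum, finset_sum_coeff]
  simp only [coeff_C_mul, coeff_X_pow, mul_ite, mul_one, mul_zero]
  rw [Finset.sum_ite_eq p.support k fun j => D (p.coeff j)]
  split_ifs with h
  · rfl
  · rw [Polynomial.notMem_support_iff.mp h, d_zero hD]

lemma dPoly_add (hD : IsDerivation D) (p q : M[X]) :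
    dPoly D (p + q) = dPoly D p + dPoly D q := by
  ext k
  simp [coeff_dPoly hD, hD.map_add]

lemma d_eval (hD : IsDerivation D) (p : M[X]) (x : M) :
    D (p.eval x) = (dPoly D p).eval x + p.derivative.eval x * D x := by
  induction p using Polynomial.induction_on' with
  | add p q ih1 ih2 =>
    rw [eval_add, hD.map_add, ih1, ih2, dPoly_add hD, derivative_add, eval_add, eval_add]
    ring
  | monomial n a =>
    have hdp : dPoly D (monomial n a) = C (D a) * X ^ n := by
      rw [dPoly, Polynomial.sum_monomial_index]
      rw [d_zero hD, map_zero, zero_mul]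
    cases n with
    | zero =>
      simp only [eval_monomial, pow_zero, mul_one, hdp, derivative_monomial]
      simp [d_zero hD]
    | succ m =>
      rw [eval_monomial, hD.leibniz, d_pow hD, hdp, derivative_monomial]
      simp only [eval_mul, eval_C, eval_pow, eval_X, eval_monomial]
      push_cast
      ring

lemma exists_minimal (P : M[X] → Prop) (x : M)
    (h : ∃ p : M[X], p ≠ 0 ∧ P p ∧ p.eval x = 0) :
    ∃ p : M[X], (p ≠ 0 ∧ P p ∧ p.eval x = 0) ∧
      ∀ q : M[X], q ≠ 0 → P q → q.eval x = 0 → p.natDegree ≤ q.natDegree := by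
  classical
  obtain ⟨p0, hp0⟩ := h
  set S : Set ℕ := {n | ∃ p : M[X], p.natDegree = n ∧ p ≠ 0 ∧ P p ∧ p.eval x = 0} with hS
  have h0 : p0.natDegree ∈ S := ⟨p0, rfl, hp0⟩
  obtain ⟨n, hn, hmin⟩ := Nat.lt_wfRel.wf.has_min S ⟨_, h0⟩
  obtain ⟨p, hpdeg, hp⟩ := hn
  refine ⟨p, hp, fun q h1 h2 h3 => ?_⟩
  rw [hpdeg]
  exact not_lt.mp fun hlt => hmin _ ⟨q, rfl, h1, h2, h3⟩ hlt

lemma d_eq_zero_of_constant_poly (hD : IsDerivation D) [CharZero M] (x : M)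
    (h : ∃ p : M[X], p ≠ 0 ∧ (∀ k, D (p.coeff k) = 0) ∧ p.eval x = 0) : D x = 0 := by
  obtain ⟨p, ⟨hp0, hpc, hpx⟩, hmin⟩ := exists_minimal _ x h
  have hdeg : p.natDegree ≠ 0 := by
    intro h0
    have := Polynomial.eq_C_of_natDegree_eq_zero h0
    rw [this, eval_C] at hpx
    rw [this, hpx, map_zero] at hp0
    exact hp0 rfl
  have hDp : dPoly D p = 0 := by
    ext k
    rw [coeff_dPoly hD, hpc k, coeff_zero]
  have h1 := d_eval hD p x
  rw [hpx, d_zero hD, hDp, eval_zero, zero_add] at h1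
  by_contra hne
  have h2 : p.derivative.eval x = 0 := by
    rcases mul_eq_zero.mp h1.symm with h | h
    · exact h
    · exact absurd h hne
  have h3 : p.derivative ≠ 0 :=
    fun hd => hdeg (Polynomial.natDegree_eq_zero_of_derivative_eq_zero hd)
  have h4 : ∀ k, D (p.derivative.coeff k) = 0 := by
    intro k
    rw [Polynomial.coeff_derivative, hD.leibniz]
    have : D ((k : M) + 1) = 0 := by
      have := d_nat hD (k + 1); push_cast at this; exact this
    rw [this, hpc (k + 1), mul_zero, zero_mul, add_zero]
  exact absurd (hmin _ h3 h4 h2) (not_le.mpr (Polynomial.natDegree_derivative_lt hdeg))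

lemma exists_poly_constant_coeffs (hD : IsDerivation D) [CharZero M]
    (F : Subfield M) (hF : ∀ y ∈ F, D y ∈ F) (x : M) (hx : D x = 0)
    (h : ∃ p : M[X], p ≠ 0 ∧ (∀ k, p.coeff k ∈ F) ∧ p.eval x = 0) :
    ∃ p : M[X], p ≠ 0 ∧ (∀ k, p.coeff k ∈ F ∧ D (p.coeff k) = 0) ∧ p.eval x = 0 := by
  obtain ⟨p, ⟨hp0, hpc, hpx⟩, hmin⟩ := exists_minimal (fun q => ∀ k, q.coeff k ∈ F) x h
  set q : M[X] := p * C p.leadingCoeff⁻¹ with hq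
  have hqm : q.Monic := Polynomial.monic_mul_leadingCoeff_inv hp0
  have hq0 : q ≠ 0 := hqm.ne_zero
  have hqc : ∀ k, q.coeff k ∈ F := by
    intro k
    rw [hq, Polynomial.coeff_mul_C]
    exact F.mul_mem (hpc k) (F.inv_mem (hpc p.natDegree))
  have hqdeg : q.natDegree = p.natDegree := by
    rw [hq, Polynomial.natDegree_mul_C (inv_ne_zero (Polynomial.leadingCoeff_ne_zero.mpr hp0))]
  have hqx : q.eval x = 0 := by rw [hq, eval_mul, hpx, zero_mul]
  have hdeg : q.natDegree ≠ 0 := by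
    intro h0
    have := Polynomial.eq_C_of_natDegree_eq_zero h0
    rw [this, eval_C] at hqx
    rw [this, hqx, map_zero] at hq0
    exact hq0 rfl
  have h1 := d_eval hD q x
  rw [hqx, d_zero hD, hx, mul_zero, add_zero] at h1
  have hDq : dPoly D q = 0 := by
    by_contra hne
    have hcoe : ∀ k, (dPoly D q).coeff k ∈ F := by
      intro k
      rw [coeff_dPoly hD]
      exact hF _ (hqc k)
    have hlt : (dPoly D q).natDegree < q.natDegree := by
      rcases lt_or_ge (dPoly D q).natDegree q.natDegree with h' | h'
      · exact h'
      · exfalso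
        have hc := Polynomial.leadingCoeff_ne_zero.mpr hne
        apply hc
        rw [Polynomial.leadingCoeff, coeff_dPoly hD]
        rcases eq_or_lt_of_le h' with he | hlt'
        · have h1c : q.coeff (dPoly D q).natDegree = 1 := by
            rw [← he]; exact hqm.coeff_natDegree
          rw [h1c, d_one hD]
        · rw [Polynomial.coeff_eq_zero_of_natDegree_lt hlt', d_zero hD]
    have := hmin _ hne hcoe h1.symm
    omega
  refine ⟨q, hq0, fun k => ⟨hqc k, ?_⟩, hqx⟩
  rw [← coeff_dPoly hD, hDq, coeff_zero]

/-- The subfield of elements of `E` whose derivative lies in `E`. -/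
def diffSub (hD : IsDerivation D) (E : Subfield M) : Subfield M where
  carrier := {x | x ∈ E ∧ D x ∈ E}
  mul_mem' := by
    rintro a b ⟨ha, ha'⟩ ⟨hb, hb'⟩
    refine ⟨E.mul_mem ha hb, ?_⟩
    rw [hD.leibniz]
    exact E.add_mem (E.mul_mem ha hb') (E.mul_mem ha' hb)
  one_mem' := ⟨E.one_mem, by rw [d_one hD]; exact E.zero_mem⟩
  add_mem' := by
    rintro a b ⟨ha, ha'⟩ ⟨hb, hb'⟩
    exact ⟨E.add_mem ha hb, by rw [hD.map_add]; exact E.add_mem ha' hb'⟩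
  zero_mem' := ⟨E.zero_mem, by rw [d_zero hD]; exact E.zero_mem⟩
  neg_mem' := by
    rintro a ⟨ha, ha'⟩
    exact ⟨E.neg_mem ha, by rw [d_neg hD]; exact E.neg_mem ha'⟩
  inv_mem' := by
    rintro a ⟨ha, ha'⟩
    refine ⟨E.inv_mem ha, ?_⟩
    rw [d_inv hD]
    exact E.mul_mem (E.neg_mem ha') (E.mul_mem (E.inv_mem ha) (E.inv_mem ha))

lemma diffClosed_sup (hD : IsDerivation D) (F G : Subfield M)
    (hF : ∀ y ∈ F, D y ∈ F) (hG : ∀ y ∈ G, D y ∈ G) :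
    ∀ y ∈ F ⊔ G, D y ∈ F ⊔ G := by
  intro y hy
  have hle : F ⊔ G ≤ diffSub hD (F ⊔ G) := by
    refine sup_le (fun z hz => ⟨SetLike.le_def.mp le_sup_left hz, SetLike.le_def.mp le_sup_left (hF z hz)⟩)
      (fun z hz => ⟨SetLike.le_def.mp le_sup_right hz, SetLike.le_def.mp le_sup_right (hG z hz)⟩)
  exact (hle hy).2

/-- Constants of a subfield, as a subfield. -/
def constSubfield (hD : IsDerivation D) (F : Subfield M) : Subfield M where
  carrier := {x | x ∈ F ∧ D x = 0}
  mul_mem' := by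
    rintro a b ⟨ha, ha'⟩ ⟨hb, hb'⟩
    exact ⟨F.mul_mem ha hb, by rw [hD.leibniz, ha', hb', mul_zero, zero_mul, add_zero]⟩
  one_mem' := ⟨F.one_mem, d_one hD⟩
  add_mem' := by
    rintro a b ⟨ha, ha'⟩ ⟨hb, hb'⟩
    exact ⟨F.add_mem ha hb, by rw [hD.map_add, ha', hb', add_zero]⟩
  zero_mem' := ⟨F.zero_mem, d_zero hD⟩
  neg_mem' := by
    rintro a ⟨ha, ha'⟩
    exact ⟨F.neg_mem ha, by rw [d_neg hD, ha', neg_zero]⟩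
  inv_mem' := by
    rintro a ⟨ha, ha'⟩
    exact ⟨F.inv_mem ha, by rw [d_inv hD, ha', neg_zero, zero_mul]⟩

lemma mem_constSubfield {hD : IsDerivation D} {F : Subfield M} {x : M} :
    x ∈ constSubfield hD F ↔ x ∈ F ∧ D x = 0 := Iff.rfl


/-- The subfield of elements integral (= algebraic) over a subfield `F`. -/
noncomputable def algSubfield (F : Subfield M) : Subfield M where
  carrier := {x | IsIntegral ↥F x}
  mul_mem' := fun ha hb => ha.mul hb
  one_mem' := isIntegral_one
  add_mem' := fun ha hb => ha.add hb
  zero_mem' := isIntegral_zero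
  neg_mem' := fun ha => ha.neg
  inv_mem' := fun x hx => hx.inv

lemma le_algSubfield (F : Subfield M) : F ≤ algSubfield F := by
  intro x hx
  exact isIntegral_algebraMap (x := (⟨x, hx⟩ : ↥F))

/-- Lift a polynomial with coefficients in `F` to a polynomial over `↥F`. -/
noncomputable def liftPoly (F : Subfield M) (p : M[X]) (h : ∀ k, p.coeff k ∈ F) : (↥F)[X] :=
  ∑ k ∈ p.support, C (⟨p.coeff k, h k⟩ : ↥F) * X ^ k

lemma map_liftPoly (F : Subfield M) (p : M[X]) (h : ∀ k, p.coeff k ∈ F) :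
    (liftPoly F p h).map F.subtype = p := by
  rw [liftPoly, Polynomial.map_sum]
  conv_rhs => rw [p.as_sum_support]
  refine Finset.sum_congr rfl fun k _ => ?_
  rw [Polynomial.map_mul, Polynomial.map_pow, map_C, map_X, Polynomial.C_mul_X_pow_eq_monomial]
  rfl

lemma liftPoly_ne_zero (F : Subfield M) (p : M[X]) (h : ∀ k, p.coeff k ∈ F) (hp : p ≠ 0) :
    liftPoly F p h ≠ 0 := by
  intro h0
  apply hp
  rw [← map_liftPoly F p h, h0, Polynomial.map_zero]

lemma isIntegral_of_poly (F : Subfield M) (x : M) (p : M[X]) (hp : p ≠ 0)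
    (hc : ∀ k, p.coeff k ∈ F) (hx : p.eval x = 0) : IsIntegral ↥F x := by
  have halg : IsAlgebraic ↥F x := by
    refine ⟨liftPoly F p hc, liftPoly_ne_zero F p hc hp, ?_⟩
    rw [aeval_def, ← Polynomial.eval_map]
    show Polynomial.eval x ((liftPoly F p hc).map F.subtype) = 0
    rw [map_liftPoly F p hc]
    exact hx
  exact halg.isIntegral

lemma poly_of_isIntegral (F : Subfield M) (x : M) (hx : IsIntegral ↥F x) :
    ∃ p : M[X], p ≠ 0 ∧ (∀ k, p.coeff k ∈ F) ∧ p.eval x = 0 := by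
  obtain ⟨q, hqm, hqx⟩ := hx
  refine ⟨q.map F.subtype, (hqm.map F.subtype).ne_zero, fun k => ?_, ?_⟩
  · rw [Polynomial.coeff_map]
    exact (q.coeff k).2
  · rw [Polynomial.eval_map]
    exact hqx

lemma mem_of_root (Cb : Subfield M)
    (hfull : ∀ p : M[X], 0 < p.degree → (∀ k, p.coeff k ∈ Cb) → ∃ y ∈ Cb, p.eval y = 0)
    (p : M[X]) (hp0 : p ≠ 0) (hpc : ∀ k, p.coeff k ∈ Cb) (x : M) (hx : p.eval x = 0) :
    x ∈ Cb := by
  have hinj : Function.Injective (Cb.subtype) := Subtype.val_injective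
  haveI : IsAlgClosed ↥Cb := by
    apply IsAlgClosed.of_exists_root
    intro q hqm hqirr
    have hdeg : 0 < (q.map Cb.subtype).degree := by
      rw [Polynomial.degree_map_eq_of_injective hinj]
      exact q.degree_pos_of_irreducible hqirr
    have hcoef : ∀ k, (q.map Cb.subtype).coeff k ∈ Cb := by
      intro k; rw [Polynomial.coeff_map]; exact (q.coeff k).2
    obtain ⟨y, hy, hroot⟩ := hfull _ hdeg hcoef
    rw [Polynomial.eval_map] at hroot
    have hzero : Cb.subtype (q.eval ⟨y, hy⟩) = 0 := by
      rw [← Polynomial.eval₂_at_apply]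
      exact hroot
    exact ⟨⟨y, hy⟩, hinj (by rw [hzero, map_zero])⟩
  set q := liftPoly Cb p hpc with hqdef
  have hq0 : q ≠ 0 := liftPoly_ne_zero Cb p hpc hp0
  have hsplit : q.Splits := IsAlgClosed.splits q
  have hfac := hsplit.eq_prod_roots
  have hpx : p = (q.map Cb.subtype) := (map_liftPoly Cb p hpc).symm
  rw [hpx, hfac] at hx
  rw [Polynomial.map_mul, Polynomial.map_multiset_prod, Polynomial.eval_mul] at hx
  rcases mul_eq_zero.mp hx with h | h
  · exfalso
    rw [Polynomial.map_C, Polynomial.eval_C] at h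
    exact Polynomial.leadingCoeff_ne_zero.mpr hq0 (hinj (by rw [map_zero]; exact h))
  · rw [Polynomial.eval_multiset_prod] at h
    have h0 := Multiset.prod_eq_zero_iff.mp h
    rw [Multiset.map_map, Multiset.map_map, Multiset.mem_map] at h0
    obtain ⟨a, _, ha⟩ := h0
    simp only [Function.comp_apply, Polynomial.map_sub, Polynomial.map_X, Polynomial.map_C,
      Polynomial.eval_sub, Polynomial.eval_X, Polynomial.eval_C] at ha
    have hxa : x = (a : M) := sub_eq_zero.mp ha
    rw [hxa]
    exact a.2

/-- Constants of an extension, linearly independent over the constants of `L`,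
remain linearly independent over `L` (`L` a differential subfield). -/
lemma lindisj (hD : IsDerivation D) (L : Subfield M) (hL : ∀ y ∈ L, D y ∈ L)
    {ι : Type*} [DecidableEq ι] (d : ι → M) (hd : ∀ i, D (d i) = 0)
    (hindep : ∀ (s : Finset ι) (c : ι → M), (∀ i, c i ∈ L ∧ D (c i) = 0) →
      ∑ i ∈ s, c i * d i = 0 → ∀ i ∈ s, c i = 0) :
    ∀ (s : Finset ι) (b : ι → M), (∀ i, b i ∈ L) → ∑ i ∈ s, b i * d i = 0 →
      ∀ i ∈ s, b i = 0 := by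
  intro s
  induction s using Finset.strongInduction with
  | _ s ih =>
    intro b hb hsum
    by_contra hcon
    push_neg at hcon
    obtain ⟨i0, hi0s, hi0⟩ := hcon
    set c : ι → M := fun i => b i / b i0 with hc
    have hcL : ∀ i, c i ∈ L := fun i => L.div_mem (hb i) (hb i0)
    have hci0 : c i0 = 1 := div_self hi0
    have hcsum : ∑ i ∈ s, c i * d i = 0 := by
      have : ∑ i ∈ s, c i * d i = (∑ i ∈ s, b i * d i) / b i0 := by
        rw [Finset.sum_div]
        exact Finset.sum_congr rfl fun i _ => by rw [hc]; ring
      rw [this, hsum, zero_div]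
    have hdsum : ∑ i ∈ s, D (c i) * d i = 0 := by
      have h1 : D (∑ i ∈ s, c i * d i) = 0 := by rw [hcsum, d_zero hD]
      rw [d_sum hD] at h1
      rw [← h1]
      refine Finset.sum_congr rfl fun i _ => ?_
      rw [hD.leibniz, hd i, mul_zero, zero_add]
    have hdci0 : D (c i0) = 0 := by rw [hci0, d_one hD]
    have herase : ∑ i ∈ s.erase i0, D (c i) * d i = 0 := by
      rw [← Finset.add_sum_erase s _ hi0s] at hdsum
      rw [hdci0, zero_mul, zero_add] at hdsum
      exact hdsum
    have hzero : ∀ i ∈ s.erase i0, D (c i) = 0 :=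
      ih (s.erase i0) (Finset.erase_ssubset hi0s) (fun i => D (c i))
        (fun i => hL _ (hcL i)) herase
    have hconst : ∀ i, (if i ∈ s then c i else 0) ∈ L ∧ D (if i ∈ s then c i else 0) = 0 := by
      intro i
      split_ifs with h
      · rcases eq_or_ne i i0 with rfl | hne
        · exact ⟨hcL i, hdci0⟩
        · exact ⟨hcL i, hzero i (Finset.mem_erase.mpr ⟨hne, h⟩)⟩
      · exact ⟨L.zero_mem, d_zero hD⟩
    have hsum2 : ∑ i ∈ s, (if i ∈ s then c i else 0) * d i = 0 := by
      rw [show (∑ i ∈ s, (if i ∈ s then c i else 0) * d i) = ∑ i ∈ s, c i * d i from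
        Finset.sum_congr rfl fun i hi => by rw [if_pos hi]]
      exact hcsum
    have hfin := hindep s (fun i => if i ∈ s then c i else 0) hconst hsum2 i0 hi0s
    simp only [if_pos hi0s] at hfin
    rw [hci0] at hfin
    exact one_ne_zero hfin

set_option synthInstance.maxHeartbeats 1000000 in
set_option maxHeartbeats 1000000 in
lemma linindep_ext (hD : IsDerivation D) (K L : Subfield M) (hKL : K ≤ L)
    (hL : ∀ y ∈ L, D y ∈ L) (hconst : ∀ x ∈ L, D x = 0 → x ∈ K)
    {n : ℕ} (η : Fin n → M) (hη : ∀ i, η i ∈ L)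
    (hηind : ∀ (s : Finset (Fin n)) (c : Fin n → M),
      (∀ i, c i ∈ K ∧ D (c i) = 0) → ∑ i ∈ s, c i * η i = 0 → ∀ i ∈ s, c i = 0)
    (s : Finset (Fin n)) (c : Fin n → M) (hc : ∀ i, D (c i) = 0)
    (hsum : ∑ i ∈ s, c i * η i = 0) : ∀ i ∈ s, c i = 0 := by
  classical
  set CK := constSubfield hD K with hCK
  let W : Submodule ↥CK M :=
  { carrier := {x | D x = 0}
    add_mem' := fun {a b} ha hb => by
      show D (a + b) = 0
      rw [hD.map_add, ha, hb, add_zero]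
    zero_mem' := d_zero hD
    smul_mem' := fun γ x hx => by
      show D ((γ : M) * x) = 0
      rw [hD.leibniz, hx, (mem_constSubfield.mp γ.2).2, mul_zero, zero_mul, add_zero] }
  let V : Submodule ↥CK M := Submodule.span ↥CK (Set.range c)
  have hVW : V ≤ W := Submodule.span_le.mpr (by rintro _ ⟨i, rfl⟩; exact hc i)
  let B := Module.Basis.ofVectorSpace ↥CK V
  let ci : Fin n → ↥V := fun i => ⟨c i, Submodule.subset_span (Set.mem_range_self i)⟩
  let d : _ → M := fun j => ((B j : ↥V) : M)
  have hdconst : ∀ j, D (d j) = 0 := fun j => hVW (B j).2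
  have hrepr : ∀ i, c i = ∑ j ∈ (B.repr (ci i)).support, ((B.repr (ci i) j : M) * d j) := by
    intro i
    have h1 : (ci i : ↥V) = ∑ j ∈ (B.repr (ci i)).support, B.repr (ci i) j • B j := by
      conv_lhs => rw [← B.linearCombination_repr (ci i)]
      rw [Finsupp.linearCombination_apply, Finsupp.sum]
    have h2 := congrArg (V.subtype) h1
    rw [map_sum] at h2
    simp only [Submodule.subtype_apply, map_smul] at h2
    exact h2
  have hdind : LinearIndependent ↥CK d :=
    B.linearIndependent.map' V.subtype V.ker_subtype
  have hind2 : ∀ (u : Finset (Module.Basis.ofVectorSpaceIndex ↥CK ↥V)) (e : _ → M),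
      (∀ j, e j ∈ L ∧ D (e j) = 0) → ∑ j ∈ u, e j * d j = 0 → ∀ j ∈ u, e j = 0 := by
    intro u e he hsum0
    have hmem : ∀ j, e j ∈ CK := fun j =>
      mem_constSubfield.mpr ⟨hconst _ (he j).1 (he j).2, (he j).2⟩
    have := linearIndependent_iff'.mp hdind u (fun j => ⟨e j, hmem j⟩)
      (by
        rw [← hsum0]
        exact Finset.sum_congr rfl fun j _ => rfl)
    intro j hj
    exact congrArg Subtype.val (this j hj)
  let T := s.biUnion fun i => (B.repr (ci i)).support
  have hTsub : ∀ i ∈ s, (B.repr (ci i)).support ⊆ T :=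
    fun i hi => Finset.subset_biUnion_of_mem (fun i => (B.repr (ci i)).support) hi
  have hext : ∀ i ∈ s, c i = ∑ j ∈ T, (B.repr (ci i) j : M) * d j := by
    intro i hi
    rw [hrepr i]
    refine Finset.sum_subset (f := fun j => (B.repr (ci i) j : M) * d j) (hTsub i hi) ?_
    intro j _ hj
    have h0 : B.repr (ci i) j = 0 := Finsupp.notMem_support_iff.mp hj
    show ((B.repr (ci i)) j : M) * d j = 0
    rw [h0, ZeroMemClass.coe_zero, zero_mul]
  have hsum3 : ∑ j ∈ T, (∑ i ∈ s, (B.repr (ci i) j : M) * η i) * d j = 0 := by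
    have e1 : ∑ j ∈ T, (∑ i ∈ s, (B.repr (ci i) j : M) * η i) * d j
        = ∑ j ∈ T, ∑ i ∈ s, (B.repr (ci i) j : M) * d j * η i := by
      refine Finset.sum_congr rfl fun j _ => ?_
      rw [Finset.sum_mul]
      exact Finset.sum_congr rfl fun i _ => by ring
    rw [e1, Finset.sum_comm]
    have e2 : ∀ i ∈ s, ∑ j ∈ T, (B.repr (ci i) j : M) * d j * η i = c i * η i := by
      intro i hi
      rw [← Finset.sum_mul, ← hext i hi]
    rw [Finset.sum_congr rfl e2]
    exact hsum
  have hbL : ∀ j, (∑ i ∈ s, (B.repr (ci i) j : M) * η i) ∈ L := fun j =>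
    L.sum_mem fun i _ => L.mul_mem (hKL (mem_constSubfield.mp (B.repr (ci i) j).2).1) (hη i)
  have hz := lindisj hD L hL d hdconst hind2 T _ hbL hsum3
  have hγ : ∀ j ∈ T, ∀ i ∈ s, (B.repr (ci i) j : M) = 0 := by
    intro j hj
    exact hηind s (fun i => (B.repr (ci i) j : M))
      (fun i => mem_constSubfield.mp (B.repr (ci i) j).2) (hz j hj)
  intro i hi
  rw [hext i hi]
  exact Finset.sum_eq_zero fun j hj => by rw [hγ j hj i hi, zero_mul]

end PVAux

/-- If `L|K` is a Picard-Vessiot extension for the equation with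
coefficients `a`, and `Cb` is an algebraic closure of the constants of `K`, then
`L̄ = L ⊔ Cb` is a Picard-Vessiot extension of `K̄ = K ⊔ Cb` for the same equation;
in particular the constants of `L̄` equal the constants `Cb` of `K̄`. -/


theorem statement_3 {M : Type*} [Field M] [CharZero M] (D : M → M) (hD : IsDerivation D)
    (K L : Subfield M) (hKdc : DiffClosed D K) (hKL : K ≤ L)
    (n : ℕ) (a : Fin n → M) (hPV : IsPicardVessiot D K L n a)
    (Cb : Subfield M) (hCb : IsAlgClosureOf (constantsOf D K) Cb) :
    IsPicardVessiot D (K ⊔ Cb) (L ⊔ Cb) n a ∧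
    constantsOf D (L ⊔ Cb) = constantsOf D (K ⊔ Cb) ∧
    constantsOf D (K ⊔ Cb) = (Cb : Set M) := by
  classical
  obtain ⟨η, ha, hsol, hlin, ⟨hKleL, hrange, hLdc, hminL⟩, hconst⟩ := hPV
  obtain ⟨hCsub, halgCb, hACF⟩ := hCb
  have hCbconst : ∀ x ∈ Cb, D x = 0 := by
    intro x hx
    obtain ⟨p, hp0, hpc, hpx⟩ := halgCb x hx
    exact PVAux.d_eq_zero_of_constant_poly hD x ⟨p, hp0, fun k => (hpc k).2, hpx⟩
  have hCbdc : ∀ y ∈ Cb, D y ∈ Cb := fun y hy => by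
    rw [hCbconst y hy]; exact Cb.zero_mem
  have hKb : DiffClosed D (K ⊔ Cb) := PVAux.diffClosed_sup hD K Cb hKdc hCbdc
  have hLb : DiffClosed D (L ⊔ Cb) := PVAux.diffClosed_sup hD L Cb hLdc hCbdc
  have hLbCb : ∀ x, x ∈ L ⊔ Cb → D x = 0 → x ∈ Cb := by
    intro x hxmem hdx
    have halg : L ⊔ Cb ≤ PVAux.algSubfield L := by
      refine sup_le (PVAux.le_algSubfield L) ?_
      intro z hz
      obtain ⟨p, hp0, hpc, hpx⟩ := halgCb z hz
      exact PVAux.isIntegral_of_poly L z p hp0 (fun k => hKL (hpc k).1) hpx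
    obtain ⟨p, hp0, hpc, hpx⟩ := PVAux.poly_of_isIntegral L x (halg hxmem)
    obtain ⟨q, hq0, hqc, hqx⟩ :=
      PVAux.exists_poly_constant_coeffs hD L hLdc x hdx ⟨p, hp0, hpc, hpx⟩
    have hqCb : ∀ k, q.coeff k ∈ Cb := by
      intro k
      have hmem : q.coeff k ∈ constantsOf D L := ⟨(hqc k).1, (hqc k).2⟩
      rw [hconst] at hmem
      exact hCsub hmem
    exact PVAux.mem_of_root Cb hACF q hq0 hqCb x hqx
  have hconstLb : constantsOf D (L ⊔ Cb) = (Cb : Set M) := by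
    ext x
    constructor
    · rintro ⟨hx1, hx2⟩
      exact hLbCb x hx1 hx2
    · intro hx
      exact ⟨SetLike.le_def.mp le_sup_right hx, hCbconst x hx⟩
  have hconstKb : constantsOf D (K ⊔ Cb) = (Cb : Set M) := by
    ext x
    constructor
    · rintro ⟨hx1, hx2⟩
      exact hLbCb x (SetLike.le_def.mp (sup_le_sup_right hKL Cb) hx1) hx2
    · intro hx
      exact ⟨SetLike.le_def.mp le_sup_right hx, hCbconst x hx⟩
  have hηL : ∀ i, η i ∈ L := fun i => hrange (Set.mem_range_self i)
  have hlin' : LinIndepOver (constantsOf D (L ⊔ Cb)) η := by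
    intro s c hcmem hsum
    have hcCb : ∀ i, c i ∈ Cb := by
      intro i
      have := hcmem i
      rw [hconstLb] at this
      exact this
    refine PVAux.linindep_ext hD K L hKL hLdc ?_ η hηL ?_ s c
      (fun i => hCbconst _ (hcCb i)) hsum
    · intro x hx hdx
      have hmem : x ∈ constantsOf D L := ⟨hx, hdx⟩
      rw [hconst] at hmem
      exact hmem.1
    · intro t c' hc' hsum'
      refine hlin t c' ?_ hsum'
      intro i
      rw [hconst]
      exact hc' i
  refine ⟨⟨η, fun i => SetLike.le_def.mp le_sup_left (ha i), hsol, hlin', ?_, ?_⟩, ?_, hconstKb⟩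
  · refine ⟨sup_le_sup_right hKleL Cb, fun z hz => SetLike.le_def.mp le_sup_left (hrange hz),
      hLb, ?_⟩
    intro F hKF hSF hFd
    refine sup_le ?_ (le_trans le_sup_right hKF)
    exact hminL F (le_trans le_sup_left hKF) hSF hFd
  · rw [hconstLb, hconstKb]
  · rw [hconstLb, hconstKb]
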